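/- Let T be any collection of subsets of U_n := {0,...,n-1} (not necessarily an abstract simplicial complex) and let Φ ∈ ℝ^{m×n}. Then every vector x̄ ∈ ℝⁿ with supp(x̄) ∈ T is the unique solution of min ‖x‖₁ subject to Φx = Φx̄ if and only if T ⊆ T_max(Φ), where T_max(Φ) = {S ⊆ U_n : ‖η_S‖₁ < ‖η_{S^c}‖₁ for every nonzero η in the nullspace of Φ}. -/
import Mathlib


/-- The ℓ₁ norm of a vector in ℝⁿ. -/
noncomputable def l1 {n : ℕ} (x : Fin n → ℝ) : ℝ := ∑ i, |x i|

/-- The ℓ₁ norm of the restriction of a vector to an index set `S`. -/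
noncomputable def l1S {n : ℕ} (S : Finset (Fin n)) (x : Fin n → ℝ) : ℝ := ∑ i ∈ S, |x i|

/-- The support of a vector, as a finite index set. -/
noncomputable def suppF {n : ℕ} (x : Fin n → ℝ) : Finset (Fin n) :=
  Finset.univ.filter (fun i => x i ≠ 0)

/-- The maximum abstract simplicial complex associated with `Φ`:
all index sets `S` with `‖η_S‖₁ < ‖η_{Sᶜ}‖₁` for every nonzero `η ∈ null(Φ)`. -/
def Tmax {m n : ℕ} (Φ : Matrix (Fin m) (Fin n) ℝ) : Set (Finset (Fin n)) :=
  {S | ∀ η : Fin n → ℝ, Φ.mulVec η = 0 → η ≠ 0 → l1S S η < l1S Sᶜ η}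

/-- Let `T` be any collection of subsets of `U_n` and `Φ ∈ ℝ^{m×n}`.  Every `xbar` with
`supp xbar ∈ T` is the unique solution of `min ‖x‖₁ s.t. Φ x = Φ xbar` iff `T ⊆ T_max(Φ)`. -/
theorem stmt2 {m n : ℕ} (Φ : Matrix (Fin m) (Fin n) ℝ) (T : Set (Finset (Fin n))) :
    (∀ xbar : Fin n → ℝ, suppF xbar ∈ T →
        ∀ x : Fin n → ℝ, Φ.mulVec x = Φ.mulVec xbar → x ≠ xbar → l1 xbar < l1 x)
      ↔ T ⊆ Tmax Φ := by
  constructor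
  · intro h S hS η hη hne
    set v : Fin n → ℝ := fun i => if i ∈ S then (if η i = 0 then 1 else -η i) else 0 with hv
    have hsupp : suppF v = S := by
      ext i
      simp only [suppF, Finset.mem_filter, Finset.mem_univ, true_and, hv]
      by_cases hi : i ∈ S
      · by_cases h0 : η i = 0 <;> simp [hi, h0]
      · simp [hi]
    have hΦ : Φ.mulVec (v + η) = Φ.mulVec v := by
      rw [Matrix.mulVec_add, hη, add_zero]
    have hxne : v + η ≠ v := by
      intro hcon
      apply hne
      funext i
      have := congrFun hcon i
      simpa using this
    have hlt := h v (by rwa [hsupp]) (v + η) hΦ hxne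
    have hv1 : l1 v = (∑ i ∈ S, if η i = 0 then (1:ℝ) else 0) + l1S S η := by
      rw [l1, l1S, ← Finset.sum_add_sum_compl S (fun i => |v i|), ← Finset.sum_add_distrib]
      have h2 : ∑ i ∈ Sᶜ, |v i| = 0 := by
        apply Finset.sum_eq_zero
        intro i hi
        simp only [Finset.mem_compl] at hi
        simp [hv, hi]
      rw [h2, add_zero]
      apply Finset.sum_congr rfl
      intro i hi
      by_cases h0 : η i = 0 <;> simp [hv, hi, h0]
    have hv2 : l1 (v + η) = (∑ i ∈ S, if η i = 0 then (1:ℝ) else 0) + l1S Sᶜ η := by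
      rw [l1, l1S, ← Finset.sum_add_sum_compl S (fun i => |(v + η) i|)]
      congr 1
      · apply Finset.sum_congr rfl
        intro i hi
        by_cases h0 : η i = 0 <;> simp [hv, hi, h0]
      · apply Finset.sum_congr rfl
        intro i hi
        simp only [Finset.mem_compl] at hi
        simp [hv, hi]
    rw [hv1, hv2] at hlt
    linarith
  · intro hT xbar hx x hΦ hne
    have hS := hT hx
    set η : Fin n → ℝ := x - xbar with hηdef
    have hη0 : Φ.mulVec η = 0 := by
      rw [hηdef, Matrix.mulVec_sub, hΦ, sub_self]
    have hηne : η ≠ 0 := sub_ne_zero.mpr hne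
    set S := suppF xbar with hSdef
    have hlt := hS η hη0 hηne
    have h1 : l1 xbar = l1S S xbar := by
      rw [l1, l1S]
      symm
      apply Finset.sum_subset (Finset.subset_univ _)
      intro i _ hi
      simp only [hSdef, suppF, Finset.mem_filter, Finset.mem_univ, true_and, not_not] at hi
      simp [hi]
    have hxdecomp : l1 x = l1S S x + l1S Sᶜ x := by
      rw [l1, l1S, l1S, Finset.sum_add_sum_compl]
    have h2 : l1S S xbar - l1S S η ≤ l1S S x := by
      rw [sub_le_iff_le_add, l1S, l1S, l1S, ← Finset.sum_add_distrib]
      apply Finset.sum_le_sum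
      intro i _
      have : xbar i = x i - η i := by simp [hηdef]
      rw [this]
      exact abs_sub _ _
    have h3 : l1S Sᶜ x = l1S Sᶜ η := by
      apply Finset.sum_congr rfl
      intro i hi
      simp only [Finset.mem_compl, hSdef, suppF, Finset.mem_filter, Finset.mem_univ,
        true_and, not_not] at hi
      simp [hηdef, hi]
    rw [h1]
    rw [hxdecomp, h3]
    linarith
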